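/- arXiv:1909.04613 — 3 statements merged into one kernel-verified Lean document; each statement's English description precedes it below -/
import Mathlib

section
/- (Peierls–Bogoliubov inequality) Let F and G be Hermitian n×n matrices with tr(exp(G)) = 1. Then log(tr(exp(F+G))) ≥ tr(F·exp(G)). -/
open Matrix

lemma jensen_exp' {n : ℕ} (w x : Fin n → ℝ) (hw : ∀ i, 0 ≤ w i) (hw1 : ∑ i, w i = 1) :
    Real.exp (∑ i, w i * x i) ≤ ∑ i, w i * Real.exp (x i) := by
  have := convexOn_exp.map_sum_le (t := Finset.univ) (w := w) (p := x)
    (fun i _ => hw i) hw1 (fun i _ => Set.mem_univ _)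
  simpa [smul_eq_mul] using this

lemma key_ineq {n : ℕ} (lam mu : Fin n → ℝ) (q : Fin n → Fin n → ℝ)
    (hq0 : ∀ j i, 0 ≤ q j i) (hcol : ∀ i, ∑ j, q j i = 1) (hrow : ∀ j, ∑ i, q j i = 1)
    (hsum : ∑ i, Real.exp (lam i) = 1) :
    ∑ i, Real.exp (lam i) * ((∑ j, mu j * q j i) - lam i)
      ≤ Real.log (∑ j, Real.exp (mu j)) := by
  have hn : 0 < n := by
    rcases Nat.eq_zero_or_pos n with h | h
    · subst h; simp at hsum
    · exact h
  set c : Fin n → ℝ := fun i => ∑ j, mu j * q j i with hc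
  -- step 1 : Jensen with weights exp (lam i)
  have h1 : Real.exp (∑ i, Real.exp (lam i) * (c i - lam i))
      ≤ ∑ i, Real.exp (lam i) * Real.exp (c i - lam i) :=
    jensen_exp' _ _ (fun i => (Real.exp_pos _).le) hsum
  have h1' : ∀ i : Fin n, Real.exp (lam i) * Real.exp (c i - lam i) = Real.exp (c i) := by
    intro i
    rw [← Real.exp_add]
    ring_nf
  rw [Finset.sum_congr rfl (fun i _ => h1' i)] at h1
  -- step 2 : each exp (c i) ≤ ∑ j, q j i * exp (mu j)
  have h2 : ∀ i : Fin n, Real.exp (c i) ≤ ∑ j, q j i * Real.exp (mu j) := by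
    intro i
    have := jensen_exp' (fun j => q j i) mu (fun j => hq0 j i) (hcol i)
    calc Real.exp (c i) = Real.exp (∑ j, q j i * mu j) := by
          simp only [hc, mul_comm]
      _ ≤ ∑ j, q j i * Real.exp (mu j) := this
  have h3 : ∑ i, Real.exp (c i) ≤ ∑ j, Real.exp (mu j) := by
    calc ∑ i, Real.exp (c i) ≤ ∑ i, ∑ j, q j i * Real.exp (mu j) :=
          Finset.sum_le_sum fun i _ => h2 i
      _ = ∑ j, (∑ i, q j i) * Real.exp (mu j) := by
          rw [Finset.sum_comm]
          simp [Finset.sum_mul]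
      _ = ∑ j, Real.exp (mu j) := by simp [hrow]
  have hpos : 0 < ∑ j, Real.exp (mu j) :=
    Finset.sum_pos (fun j _ => Real.exp_pos _) (by simp [Finset.univ_nonempty_iff, Fin.pos_iff_nonempty.mp hn])
  rw [Real.le_log_iff_exp_le hpos]
  exact h1.trans h3

set_option maxHeartbeats 1000000 in
lemma exp_hermitian {n : ℕ} {A : Matrix (Fin n) (Fin n) ℝ} (hA : A.IsHermitian) :
    NormedSpace.exp A =
      (hA.eigenvectorUnitary : Matrix (Fin n) (Fin n) ℝ) *
        Matrix.diagonal (fun i => Real.exp (hA.eigenvalues i)) *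
        star (hA.eigenvectorUnitary : Matrix (Fin n) (Fin n) ℝ) := by
  let u := Unitary.toUnits hA.eigenvectorUnitary
  have hu : (u : Matrix (Fin n) (Fin n) ℝ) = hA.eigenvectorUnitary := rfl
  have hu' : ((u⁻¹ : (Matrix (Fin n) (Fin n) ℝ)ˣ) : Matrix (Fin n) (Fin n) ℝ)
      = star (hA.eigenvectorUnitary : Matrix (Fin n) (Fin n) ℝ) := rfl
  have h := Matrix.exp_units_conj u (Matrix.diagonal (RCLike.ofReal ∘ hA.eigenvalues))
  rw [hu', hu, Matrix.exp_diagonal, show (hA.eigenvectorUnitary : Matrix (Fin n) (Fin n) ℝ) *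
      Matrix.diagonal (RCLike.ofReal ∘ hA.eigenvalues) * star (hA.eigenvectorUnitary : Matrix (Fin n) (Fin n) ℝ)
      = A from hA.spectral_theorem.symm] at h
  rw [h]
  congr 2
  rw [Pi.exp_def]; funext i; simp [← Real.exp_eq_exp_ℝ]

/-- Peierls–Bogoliubov inequality: for Hermitian (real symmetric) n×n
matrices F, G with tr(exp G) = 1, we have log(tr(exp(F+G))) ≥ tr(F·exp G). -/
theorem peierls_bogoliubov {n : ℕ} (F G : Matrix (Fin n) (Fin n) ℝ)
    (hF : F.IsHermitian) (hG : G.IsHermitian)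
    (htr : (NormedSpace.exp G).trace = 1) :
    (F * NormedSpace.exp G).trace ≤ Real.log ((NormedSpace.exp (F + G)).trace) := by
  classical
  have hA : (F + G).IsHermitian := hF.add hG
  set U : Matrix (Fin n) (Fin n) ℝ := (hA.eigenvectorUnitary : Matrix (Fin n) (Fin n) ℝ) with hU
  set V : Matrix (Fin n) (Fin n) ℝ := (hG.eigenvectorUnitary : Matrix (Fin n) (Fin n) ℝ) with hV
  set lam : Fin n → ℝ := hG.eigenvalues with hlam
  set mu : Fin n → ℝ := hA.eigenvalues with hmu
  set W : Matrix (Fin n) (Fin n) ℝ := star U * V with hW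
  have hUU : star U * U = 1 := Unitary.coe_star_mul_self hA.eigenvectorUnitary
  have hUU' : U * star U = 1 := Unitary.coe_mul_star_self hA.eigenvectorUnitary
  have hVV : star V * V = 1 := Unitary.coe_star_mul_self hG.eigenvectorUnitary
  have hVV' : V * star V = 1 := Unitary.coe_mul_star_self hG.eigenvectorUnitary
  have hWW : star W * W = 1 := by
    rw [hW, Matrix.star_mul, star_star, mul_assoc, ← mul_assoc U, hUU', one_mul, hVV]
  have hWW' : W * star W = 1 := by
    rw [hW, Matrix.star_mul, star_star, mul_assoc, ← mul_assoc V, hVV', one_mul, hUU]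
  set q : Fin n → Fin n → ℝ := fun j i => (W j i) ^ 2 with hq
  -- trace of exp G
  have htrG : (NormedSpace.exp G).trace = ∑ i, Real.exp (lam i) := by
    rw [exp_hermitian hG, Matrix.trace_mul_cycle, ← hV, hVV, one_mul, Matrix.trace_diagonal]
  -- trace of exp (F+G)
  have htrA : (NormedSpace.exp (F + G)).trace = ∑ j, Real.exp (mu j) := by
    rw [exp_hermitian hA, Matrix.trace_mul_cycle, ← hU, hUU, one_mul, Matrix.trace_diagonal]
  -- star V * G * V = diagonal lam
  have hGdiag : star V * G * V = Matrix.diagonal lam := by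
    have := hG.conjStarAlgAut_star_eigenvectorUnitary
    rw [Unitary.conjStarAlgAut_apply, Unitary.coe_star, star_star, ← hV, ← hlam] at this
    exact this
  -- star V * (F+G) * V = star W * diagonal mu * W
  have hAdiag : star V * (F + G) * V = star W * Matrix.diagonal mu * W := by
    conv_lhs => rw [hA.spectral_theorem, Unitary.conjStarAlgAut_apply]
    rw [hW, Matrix.star_mul, star_star]
    have h1 : (RCLike.ofReal ∘ hA.eigenvalues : Fin n → ℝ) = mu := rfl
    rw [h1, ← hU]
    simp only [Matrix.mul_assoc]
  -- entries of star W * diagonal mu * W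
  have hentry : ∀ i, (star W * Matrix.diagonal mu * W) i i = ∑ j, mu j * q j i := by
    intro i
    rw [Matrix.mul_assoc, Matrix.mul_apply]
    congr 1
    funext j
    simp only [Matrix.diagonal_mul, Matrix.star_apply, star_trivial, hq]
    ring
  have hcol : ∀ i, ∑ j, q j i = 1 := by
    intro i
    have h := congrFun (congrFun hWW i) i
    rw [Matrix.mul_apply] at h
    simp only [Matrix.conjTranspose_apply, star_trivial, Matrix.one_apply_eq] at h
    rw [← h]
    exact Finset.sum_congr rfl fun j _ => by simp [hq]; ring
  have hrow : ∀ j, ∑ i, q j i = 1 := by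
    intro j
    have h := congrFun (congrFun hWW' j) j
    rw [Matrix.mul_apply] at h
    simp only [Matrix.conjTranspose_apply, star_trivial, Matrix.one_apply_eq] at h
    rw [← h]
    exact Finset.sum_congr rfl fun i _ => by simp [hq]; ring
  have hsum : ∑ i, Real.exp (lam i) = 1 := by rw [← htrG, htr]
  -- compute trace (F * exp G)
  have htrF : (F * NormedSpace.exp G).trace
      = ∑ i, Real.exp (lam i) * ((∑ j, mu j * q j i) - lam i) := by
    rw [exp_hermitian hG, ← hV]
    set e : Fin n → ℝ := fun i => Real.exp (lam i) with he
    have h2 : star V * F * V = star W * Matrix.diagonal mu * W - Matrix.diagonal lam := by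
      rw [← hAdiag, ← hGdiag]
      noncomm_ring
    have hre : F * (V * Matrix.diagonal e * star V) = (F * V) * Matrix.diagonal e * star V := by
      simp only [Matrix.mul_assoc]
    rw [hre, Matrix.trace_mul_cycle]
    have hre2 : star V * (F * V) * Matrix.diagonal e = (star V * F * V) * Matrix.diagonal e := by
      simp only [Matrix.mul_assoc]
    rw [hre2, h2, Matrix.sub_mul, Matrix.trace_sub]
    have hX : ∀ (X : Matrix (Fin n) (Fin n) ℝ),
        (X * Matrix.diagonal e).trace = ∑ i, X i i * Real.exp (lam i) := by
      intro X; simp [Matrix.trace, Matrix.diag, Matrix.mul_diagonal, he]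
    rw [hX, hX, ← Finset.sum_sub_distrib]
    refine Finset.sum_congr rfl fun i _ => ?_
    rw [hentry i, Matrix.diagonal_apply_eq]
    ring
  rw [htrF, htrA]
  exact key_ineq lam mu q (fun j i => sq_nonneg _) hcol hrow hsum
end

section
/- If T_l = Σ_{k=0}^{l} (−H)^k / k! is the Taylor truncation of the matrix exponential of a Hermitian matrix H at an even degree l, then T_l is positive semidefinite. -/
open Matrix

lemma taylor_exp_sum_nonneg (l : ℕ) (hl : Even l) (x : ℝ) :
    0 ≤ ∑ k ∈ Finset.range (l + 1), ((k.factorial : ℝ))⁻¹ * x ^ k := by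
  set f : ℝ → ℝ := fun x => ∑ k ∈ Finset.range (l + 1), ((k.factorial : ℝ))⁻¹ * x ^ k with hf
  have hderiv : ∀ x : ℝ, HasDerivAt f (f x - ((l.factorial : ℝ))⁻¹ * x ^ l) x := by
    intro x
    have h1 : HasDerivAt f (∑ k ∈ Finset.range (l + 1),
        ((k.factorial : ℝ))⁻¹ * (k * x ^ (k - 1))) x := by
      apply HasDerivAt.fun_sum
      intro k _
      exact (hasDerivAt_pow k x).const_mul _
    have h2 : (∑ k ∈ Finset.range (l + 1), ((k.factorial : ℝ))⁻¹ * (k * x ^ (k - 1)))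
        = f x - ((l.factorial : ℝ))⁻¹ * x ^ l := by
      rw [Finset.sum_range_succ' (fun k => ((k.factorial : ℝ))⁻¹ * (k * x ^ (k - 1)))]
      have hterm : ∀ k : ℕ, (((k+1).factorial : ℝ))⁻¹ * (((k:ℕ)+1 : ℕ) * x ^ ((k+1) - 1))
          = ((k.factorial : ℝ))⁻¹ * x ^ k := by
        intro k
        have hk : ((k.factorial : ℝ)) ≠ 0 := Nat.cast_ne_zero.2 k.factorial_ne_zero
        have hk1 : ((k : ℝ) + 1) ≠ 0 := by positivity
        rw [Nat.factorial_succ, Nat.add_sub_cancel]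
        push_cast
        field_simp
      rw [Finset.sum_congr rfl fun k _ => hterm k]
      simp only [Nat.cast_zero, zero_mul, mul_zero, add_zero, hf]
      rw [Finset.sum_range_succ]
      ring
    rwa [h2] at h1
  set g : ℝ → ℝ := fun x => f x * Real.exp (-x) with hg
  have hgderiv : ∀ x : ℝ, HasDerivAt g (-(((l.factorial : ℝ))⁻¹ * x ^ l * Real.exp (-x))) x := by
    intro x
    have he : HasDerivAt (fun x : ℝ => Real.exp (-x)) (-Real.exp (-x)) x := by
      exact ((Real.hasDerivAt_exp (-x)).comp x (hasDerivAt_neg x)).congr_deriv (by simp)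
    have := (hderiv x).fun_mul he
    exact this.congr_deriv (by ring)
  have hanti : Antitone g := by
    apply antitone_of_deriv_nonpos
    · exact fun x => (hgderiv x).differentiableAt
    · intro x
      rw [(hgderiv x).deriv, neg_nonpos]
      have h1 : (0:ℝ) ≤ x ^ l := hl.pow_nonneg x
      have h2 : (0:ℝ) ≤ ((l.factorial : ℝ))⁻¹ := by positivity
      exact mul_nonneg (mul_nonneg h2 h1) (Real.exp_pos (-x)).le
  have htend : Filter.Tendsto g Filter.atTop (nhds 0) := by
    have : g = fun x => ∑ k ∈ Finset.range (l + 1),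
        ((k.factorial : ℝ))⁻¹ * (x ^ k * Real.exp (-x)) := by
      funext x
      simp [g, f, Finset.sum_mul, mul_assoc]
    rw [this]
    have h0 : (0:ℝ) = ∑ k ∈ Finset.range (l + 1), ((k.factorial : ℝ))⁻¹ * 0 := by simp
    rw [h0]
    exact tendsto_finset_sum _ fun k _ =>
      (Real.tendsto_pow_mul_exp_neg_atTop_nhds_zero k).const_mul _
  have hg0 : 0 ≤ g x := by
    apply le_of_tendsto htend
    filter_upwards [Filter.eventually_ge_atTop x] with y hy
    exact hanti hy
  have : 0 ≤ f x * Real.exp (-x) := hg0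
  nlinarith [Real.exp_pos (-x)]

/-- the Taylor truncation T_l = Σ_{k=0}^{l} (−H)^k/k! of the matrix exponential
of a Hermitian matrix H at an even degree l is positive semidefinite. -/
theorem even_taylor_truncation_posSemidef {n : ℕ}
    (H : Matrix (Fin n) (Fin n) ℝ) (hH : H.IsHermitian) (l : ℕ) (hl : Even l) :
    (∑ k ∈ Finset.range (l + 1), ((k.factorial : ℝ))⁻¹ • (-H) ^ k).PosSemidef := by
  have hA : (-H).IsHermitian := hH.neg
  set U : Matrix (Fin n) (Fin n) ℝ := (hA.eigenvectorUnitary : Matrix (Fin n) (Fin n) ℝ) with hU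
  set d : Fin n → ℝ := hA.eigenvalues with hd
  have hspec : -H = U * diagonal d * star U := by
    have := hA.spectral_theorem
    simpa using this
  have hUU : U * star U = 1 := (Matrix.mem_unitaryGroup_iff).mp hA.eigenvectorUnitary.2
  have hUU' : star U * U = 1 := (Matrix.mem_unitaryGroup_iff').mp hA.eigenvectorUnitary.2
  have hpow : ∀ k : ℕ, (-H) ^ k = U * diagonal (fun i => d i ^ k) * star U := by
    intro k
    induction k with
    | zero => simp [hUU]
    | succ k ih =>
      rw [pow_succ, ih, hspec]
      have : diagonal (fun i => d i ^ k) * star U * (U * diagonal d * star U)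
          = diagonal (fun i => d i ^ (k+1)) * star U := by
        rw [show diagonal (fun i => d i ^ k) * star U * (U * diagonal d * star U)
            = diagonal (fun i => d i ^ k) * (star U * U) * diagonal d * star U by
          simp only [Matrix.mul_assoc],
          hUU', Matrix.mul_one, diagonal_mul_diagonal]
        congr 1
      calc U * diagonal (fun i => d i ^ k) * star U * (U * diagonal d * star U)
          = U * (diagonal (fun i => d i ^ k) * star U * (U * diagonal d * star U)) := by
            simp only [Matrix.mul_assoc]
        _ = U * (diagonal (fun i => d i ^ (k+1)) * star U) := by rw [this]
        _ = U * diagonal (fun i => d i ^ (k+1)) * star U := by simp only [Matrix.mul_assoc]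
  have hsum : (∑ k ∈ Finset.range (l + 1), ((k.factorial : ℝ))⁻¹ • (-H) ^ k)
      = U * diagonal (fun i => ∑ k ∈ Finset.range (l + 1),
          ((k.factorial : ℝ))⁻¹ * d i ^ k) * star U := by
    calc (∑ k ∈ Finset.range (l + 1), ((k.factorial : ℝ))⁻¹ • (-H) ^ k)
        = ∑ k ∈ Finset.range (l + 1),
            U * (((k.factorial : ℝ))⁻¹ • diagonal (fun i => d i ^ k)) * star U := by
          refine Finset.sum_congr rfl fun k _ => ?_
          rw [hpow k, Matrix.mul_smul, Matrix.smul_mul]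
      _ = U * (∑ k ∈ Finset.range (l + 1),
            ((k.factorial : ℝ))⁻¹ • diagonal (fun i => d i ^ k)) * star U := by
          rw [Matrix.mul_sum, Finset.sum_mul]
      _ = _ := by
          congr 1
          congr 1
          ext i j
          simp only [Matrix.sum_apply, Matrix.smul_apply, diagonal_apply, smul_eq_mul]
          by_cases h : i = j <;> simp [h]
  rw [hsum]
  have hdiag : (diagonal (fun i => ∑ k ∈ Finset.range (l + 1),
      ((k.factorial : ℝ))⁻¹ * d i ^ k)).PosSemidef :=
    posSemidef_diagonal_iff.2 fun i => taylor_exp_sum_nonneg l hl (d i)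
  simpa [Matrix.star_eq_conjTranspose] using hdiag.mul_mul_conjTranspose_same U
end

section
/- Let ρ be an n×n positive semidefinite matrix with trace 1 written in 2×2 block form with blocks ρ₁₁ (of size |B|×|B|), ρ₁₂, ρ₂₁ = ρ₁₂ᵀ, ρ₂₂. Then ‖ρ₁₁‖_tr² + 2‖ρ₁₂‖_tr² + ‖ρ₂₂‖_tr² ≤ 1. -/
open Matrix

/-- The old Mathlib `Matrix.PosSemidef.sqrt` (removed since), spelled out with its old definition. -/
noncomputable def posSemidefSqrt {n : Type*} [Fintype n] [DecidableEq n] {A : Matrix n n ℝ}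
    (hA : A.PosSemidef) : Matrix n n ℝ :=
  hA.1.eigenvectorUnitary.1 * diagonal ((↑) ∘ (√·) ∘ hA.1.eigenvalues) *
  (star hA.1.eigenvectorUnitary : Matrix n n ℝ)

/-- Trace (Schatten-1) norm of a real matrix: trace of the psd square root of AᵀA. -/
noncomputable def traceNorm {m k : Type*} [Fintype m] [Fintype k] [DecidableEq k]
    (A : Matrix m k ℝ) : ℝ :=
  (posSemidefSqrt (Matrix.posSemidef_conjTranspose_mul_self A)).trace

open scoped MatrixOrder in
lemma aux_sqrt_eq {n : Type*} [Fintype n] [DecidableEq n] {A : Matrix n n ℝ}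
    (hA : A.PosSemidef) : posSemidefSqrt hA = CFC.sqrt A := by
  rw [CFC.sqrt_eq_cfc, cfc_nnreal_eq_real _ A, hA.1.cfc_eq]
  simp only [IsHermitian.cfc, Unitary.conjStarAlgAut_apply, posSemidefSqrt]
  congr 3
  funext i
  simp [hA.eigenvalues_nonneg i]

section Aux

variable {m k : Type*} [Fintype m] [Fintype k]

lemma aux_traceNorm_eq_sum [DecidableEq k] (A : Matrix m k ℝ) :
    traceNorm A = ∑ i, Real.sqrt ((posSemidef_conjTranspose_mul_self A).1.eigenvalues i) := by
  unfold traceNorm posSemidefSqrt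
  rw [trace_mul_comm, ← Matrix.mul_assoc, Unitary.coe_star_mul_self, Matrix.one_mul,
    trace_diagonal]
  simp

open scoped MatrixOrder in
lemma aux_traceNorm_psd {n : Type*} [Fintype n] [DecidableEq n] {A : Matrix n n ℝ}
    (hA : A.PosSemidef) : traceNorm A = A.trace := by
  unfold traceNorm
  congr 1
  rw [aux_sqrt_eq, hA.isHermitian.eq, CFC.sqrt_mul_self A hA.nonneg]

lemma aux_toBlocks21_eq {ρ : Matrix (m ⊕ k) (m ⊕ k) ℝ} (hρ : ρ.IsHermitian) :
    ρ.toBlocks₂₁ = ρ.toBlocks₁₂ᵀ := by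
  ext i j
  have := congrFun (congrFun hρ.eq (Sum.inr i)) (Sum.inl j)
  simpa [conjTranspose_apply, toBlocks₂₁, toBlocks₁₂] using this.symm

/-- The key 2×2-quadratic-form inequality coming from positive semidefiniteness. -/
lemma aux_quad_block {ρ : Matrix (m ⊕ k) (m ⊕ k) ℝ} (hρ : ρ.PosSemidef)
    (u : m → ℝ) (v : k → ℝ) :
    (u ⬝ᵥ (ρ.toBlocks₁₂ *ᵥ v)) ^ 2 ≤
      (u ⬝ᵥ (ρ.toBlocks₁₁ *ᵥ u)) * (v ⬝ᵥ (ρ.toBlocks₂₂ *ᵥ v)) := by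
  have key : ∀ t : ℝ, 0 ≤ (u ⬝ᵥ (ρ.toBlocks₁₁ *ᵥ u)) * (t * t) +
      (2 * (u ⬝ᵥ (ρ.toBlocks₁₂ *ᵥ v))) * t + (v ⬝ᵥ (ρ.toBlocks₂₂ *ᵥ v)) := by
    intro t
    have h := hρ.dotProduct_mulVec_nonneg (Sum.elim (t • u) v)
    rw [show ρ = fromBlocks ρ.toBlocks₁₁ ρ.toBlocks₁₂ ρ.toBlocks₂₁ ρ.toBlocks₂₂ from
      (fromBlocks_toBlocks ρ).symm] at h
    rw [fromBlocks_mulVec, star_trivial, sumElim_dotProduct_sumElim,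
      aux_toBlocks21_eq hρ.isHermitian] at h
    simp only [Sum.elim_comp_inl, Sum.elim_comp_inr] at h
    have hrw : v ⬝ᵥ (ρ.toBlocks₁₂ᵀ *ᵥ (t • u)) = t * (u ⬝ᵥ (ρ.toBlocks₁₂ *ᵥ v)) := by
      rw [mulVec_transpose, smul_vecMul, dotProduct_smul, dotProduct_comm, ← dotProduct_mulVec]
      rfl
    rw [mulVec_smul, dotProduct_add, dotProduct_add, smul_dotProduct, dotProduct_smul,
      hrw] at h
    calc (0:ℝ) ≤ _ := h
    _ = _ := by simp only [smul_dotProduct, smul_eq_mul]; ring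
  have h2 := discrim_le_zero key
  rw [discrim] at h2
  nlinarith [h2]

lemma aux_dot_mulVec_mulVec (B : Matrix m k ℝ) (x y : k → ℝ) :
    (B *ᵥ x) ⬝ᵥ (B *ᵥ y) = x ⬝ᵥ ((Bᴴ * B) *ᵥ y) := by
  rw [← mulVec_mulVec, ← star_trivial (B *ᵥ x), star_mulVec, ← dotProduct_mulVec]
  simp

lemma aux_dotProduct_fsum (x : m → ℝ) (f : k → (m → ℝ)) :
    x ⬝ᵥ (∑ i, f i) = ∑ i, x ⬝ᵥ f i := by
  simp only [dotProduct, Finset.sum_apply, Finset.mul_sum]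
  exact Finset.sum_comm

lemma aux_fsum_dotProduct (x : m → ℝ) (f : k → (m → ℝ)) :
    (∑ i, f i) ⬝ᵥ x = ∑ i, f i ⬝ᵥ x := by
  simp only [dotProduct_comm _ x]
  exact aux_dotProduct_fsum x f

/-- Bessel-type inequality for a family with `w i ⬝ᵥ w j = if i = j then d i else 0`, `d i ≤ 1`. -/
lemma aux_bessel_dot [DecidableEq k]
    (w : k → (m → ℝ)) (d : k → ℝ) (hd1 : ∀ i, d i ≤ 1)
    (hww : ∀ i j, w i ⬝ᵥ w j = if i = j then d i else 0) (x : m → ℝ) :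
    ∑ i, (w i ⬝ᵥ x) ^ 2 ≤ x ⬝ᵥ x := by
  set c : k → ℝ := fun i => w i ⬝ᵥ x with hc
  set S : m → ℝ := ∑ i, c i • w i with hS
  have h0 : (0:ℝ) ≤ (x - S) ⬝ᵥ (x - S) :=
    Finset.sum_nonneg fun p _ => mul_self_nonneg _
  have hxS : x ⬝ᵥ S = ∑ i, c i ^ 2 := by
    rw [hS, aux_dotProduct_fsum]
    refine Finset.sum_congr rfl fun i _ => ?_
    rw [dotProduct_smul, smul_eq_mul, dotProduct_comm, pow_two]
  have hSx : S ⬝ᵥ x = ∑ i, c i ^ 2 := by rw [dotProduct_comm, hxS]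
  have hSS : S ⬝ᵥ S = ∑ i, c i ^ 2 * d i := by
    rw [hS, aux_fsum_dotProduct]
    refine Finset.sum_congr rfl fun i _ => ?_
    rw [smul_dotProduct, aux_dotProduct_fsum]
    simp only [dotProduct_smul, smul_eq_mul, hww]
    simp only [mul_ite, mul_zero, Finset.sum_ite_eq, Finset.mem_univ, if_true]
    ring
  have hexp : (x - S) ⬝ᵥ (x - S) = x ⬝ᵥ x - 2 * ∑ i, c i ^ 2 + ∑ i, c i ^ 2 * d i := by
    rw [sub_dotProduct, dotProduct_sub, dotProduct_sub, hxS, hSx, hSS]; ring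
  have hdsum : ∑ i, c i ^ 2 * d i ≤ ∑ i, c i ^ 2 := by
    apply Finset.sum_le_sum
    intro i _
    nlinarith [sq_nonneg (c i), hd1 i]
  nlinarith [h0, hexp, hdsum]

/-- Sum of quadratic forms over the rows of an orthogonal family equals the trace. -/
lemma aux_sum_quad_eq_trace [DecidableEq k] (Q : Matrix k k ℝ) (v : k → (k → ℝ))
    (hrow : ∀ p q, (∑ i, v i p * v i q) = if p = q then (1:ℝ) else 0) :
    ∑ i, v i ⬝ᵥ (Q *ᵥ v i) = Q.trace := by
  classical
  calc ∑ i, v i ⬝ᵥ (Q *ᵥ v i) = ∑ i, ∑ p, ∑ q, Q p q * (v i p * v i q) := by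
        refine Finset.sum_congr rfl fun i _ => ?_
        simp only [dotProduct, mulVec]
        refine Finset.sum_congr rfl fun p _ => ?_
        rw [Finset.mul_sum]
        exact Finset.sum_congr rfl fun q _ => by ring
  _ = ∑ p, ∑ q, Q p q * ∑ i, v i p * v i q := by
        rw [Finset.sum_comm]
        refine Finset.sum_congr rfl fun p _ => ?_
        rw [Finset.sum_comm]
        refine Finset.sum_congr rfl fun q _ => ?_
        rw [Finset.mul_sum]
  _ = Q.trace := by
        refine Finset.sum_congr rfl fun p _ => ?_
        simp [hrow, mul_ite, Finset.sum_ite_eq]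

open scoped MatrixOrder in
/-- Sum of quadratic forms of a psd matrix over a sub-orthonormal family is at most the trace. -/
lemma aux_sum_quad_le_trace [DecidableEq m] [DecidableEq k] {P : Matrix m m ℝ} (hP : P.PosSemidef)
    (w : k → (m → ℝ)) (d : k → ℝ) (hd1 : ∀ i, d i ≤ 1)
    (hww : ∀ i j, w i ⬝ᵥ w j = if i = j then d i else 0) :
    ∑ i, w i ⬝ᵥ (P *ᵥ w i) ≤ P.trace := by
  set R := CFC.sqrt P with hRdef
  have hRR : R * R = P := CFC.sqrt_mul_sqrt_self P hP.nonneg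
  have hRH : Rᴴ = R := (CFC.sqrt_nonneg P).posSemidef.1
  have ha' : ∀ i, w i ⬝ᵥ (P *ᵥ w i) = (R *ᵥ w i) ⬝ᵥ (R *ᵥ w i) := by
    intro i
    rw [aux_dot_mulVec_mulVec, hRH, hRR]
  have hkey : ∀ i, w i ⬝ᵥ (P *ᵥ w i) = ∑ p, (w i ⬝ᵥ R p) ^ 2 := by
    intro i
    rw [ha' i]
    simp only [dotProduct, mulVec, pow_two]
    refine Finset.sum_congr rfl fun p _ => ?_
    exact congrArg₂ (· * ·) (Finset.sum_congr rfl fun q _ => mul_comm _ _)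
      (Finset.sum_congr rfl fun q _ => mul_comm _ _)
  have hRsym : ∀ p q, R p q = R q p := by
    intro p q
    have h := congrFun (congrFun hRH p) q
    simpa [conjTranspose_apply] using h.symm
  calc ∑ i, w i ⬝ᵥ (P *ᵥ w i) = ∑ p, ∑ i, (w i ⬝ᵥ R p) ^ 2 := by
        rw [Finset.sum_comm]
        exact Finset.sum_congr rfl fun i _ => hkey i
  _ ≤ ∑ p, R p ⬝ᵥ R p := Finset.sum_le_sum fun p _ => aux_bessel_dot w d hd1 hww (R p)
  _ = P.trace := by
        rw [← hRR]
        refine Finset.sum_congr rfl fun p _ => ?_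
        simp only [dotProduct, Matrix.trace, Matrix.diag, Matrix.mul_apply]
        exact Finset.sum_congr rfl fun q _ => by rw [hRsym p q]

end Aux

/-- for a density matrix ρ in 2×2 block form,
‖ρ₁₁‖_tr² + 2‖ρ₁₂‖_tr² + ‖ρ₂₂‖_tr² ≤ 1. -/
theorem block_trace_norms_sq_le_one {m k : Type*}
    [Fintype m] [Fintype k] [DecidableEq m] [DecidableEq k]
    (ρ : Matrix (m ⊕ k) (m ⊕ k) ℝ) (hρ : ρ.PosSemidef) (htr : ρ.trace = 1) :
    traceNorm ρ.toBlocks₁₁ ^ 2 + 2 * traceNorm ρ.toBlocks₁₂ ^ 2 +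
      traceNorm ρ.toBlocks₂₂ ^ 2 ≤ 1 := by
  classical
  set B := ρ.toBlocks₁₂ with hBdef
  have hP : ρ.toBlocks₁₁.PosSemidef := hρ.submatrix Sum.inl
  have hQ : ρ.toBlocks₂₂.PosSemidef := hρ.submatrix Sum.inr
  have htrace_split : ρ.toBlocks₁₁.trace + ρ.toBlocks₂₂.trace = 1 := by
    rw [← htr]
    simp [Matrix.trace, Fintype.sum_sum_type, toBlocks₁₁, toBlocks₂₂, Matrix.diag]
  have hPt : 0 ≤ ρ.toBlocks₁₁.trace := by
    apply Finset.sum_nonneg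
    intro i _
    simpa using hP.dotProduct_mulVec_nonneg (Pi.single i 1)
  have hQt : 0 ≤ ρ.toBlocks₂₂.trace := by
    apply Finset.sum_nonneg
    intro i _
    simpa using hQ.dotProduct_mulVec_nonneg (Pi.single i 1)
  -- spectral data of `BᴴB`
  have hM := posSemidef_conjTranspose_mul_self B
  set μ : k → ℝ := hM.1.eigenvalues with hμdef
  set v : k → (k → ℝ) := fun i => ⇑(hM.1.eigenvectorBasis i) with hvdef
  have hμ0 : ∀ i, 0 ≤ μ i := fun i => hM.eigenvalues_nonneg i
  have hBvBv : ∀ i j, (B *ᵥ v i) ⬝ᵥ (B *ᵥ v j) = if i = j then μ j else 0 := by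
    intro i j
    have horth := orthonormal_iff_ite.mp hM.1.eigenvectorBasis.orthonormal i j
    rw [aux_dot_mulVec_mulVec, hM.1.mulVec_eigenvectorBasis j, dotProduct_smul]
    simp only [smul_eq_mul]
    rw [show v i ⬝ᵥ v j = if i = j then 1 else 0 by
      simpa [PiLp.inner_apply, RCLike.inner_apply, dotProduct, hvdef, mul_comm] using horth]
    simp [mul_ite, hμdef]
  have hrow : ∀ p q, (∑ i, v i p * v i q) = if p = q then (1:ℝ) else 0 := by
    intro p q
    have h := congrFun (congrFun (mem_unitaryGroup_iff.mp (hM.1.eigenvectorUnitary).2) p) q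
    simpa [Matrix.mul_apply, Matrix.one_apply, Matrix.star_apply, hvdef] using h
  -- the left singular family
  set w : k → (m → ℝ) := fun i =>
    if μ i = 0 then 0 else (Real.sqrt (μ i))⁻¹ • (B *ᵥ v i) with hwdef
  set d : k → ℝ := fun i => if μ i = 0 then 0 else 1 with hddef
  have hd1 : ∀ i, d i ≤ 1 := by intro i; by_cases h : μ i = 0 <;> simp [hddef, h]
  have hsq : ∀ i, μ i ≠ 0 → (Real.sqrt (μ i))⁻¹ * (Real.sqrt (μ i))⁻¹ = (μ i)⁻¹ := by
    intro i hi
    rw [← mul_inv, Real.mul_self_sqrt (hμ0 i)]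
  have hww : ∀ i j, w i ⬝ᵥ w j = if i = j then d i else 0 := by
    intro i j
    rcases eq_or_ne i j with rfl | hij
    · by_cases hi : μ i = 0
      · simp [hwdef, hddef, hi]
      · simp only [hwdef, hddef, hi, if_neg, if_pos rfl, ite_false, ↓reduceIte]
        rw [smul_dotProduct, dotProduct_smul, hBvBv i i, if_pos rfl, smul_eq_mul, smul_eq_mul,
          ← mul_assoc, hsq i hi]
        field_simp
    · by_cases hi : μ i = 0 <;> by_cases hj : μ j = 0 <;>
        simp [hwdef, hij, hi, hj, smul_dotProduct, dotProduct_smul, hBvBv i j]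
  set a : k → ℝ := fun i => w i ⬝ᵥ (ρ.toBlocks₁₁ *ᵥ w i) with hadef
  set b : k → ℝ := fun i => v i ⬝ᵥ (ρ.toBlocks₂₂ *ᵥ v i) with hbdef
  have ha0 : ∀ i, 0 ≤ a i := fun i => by simpa using hP.dotProduct_mulVec_nonneg (w i)
  have hb0 : ∀ i, 0 ≤ b i := fun i => by simpa using hQ.dotProduct_mulVec_nonneg (v i)
  -- per-eigenvalue bound
  have hμab : ∀ i, μ i ≤ a i * b i := by
    intro i
    by_cases hi : μ i = 0
    · simp [hadef, hwdef, hi]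
    · have hq := aux_quad_block hρ (B *ᵥ v i) (v i)
      have h1 : (B *ᵥ v i) ⬝ᵥ (B *ᵥ v i) = μ i := by simpa using hBvBv i i
      rw [← hBdef, h1] at hq
      have ha' : a i = (μ i)⁻¹ * ((B *ᵥ v i) ⬝ᵥ (ρ.toBlocks₁₁ *ᵥ (B *ᵥ v i))) := by
        simp only [hadef, hwdef, hi, ite_false]
        rw [mulVec_smul, smul_dotProduct, dotProduct_smul, smul_eq_mul, smul_eq_mul,
          ← mul_assoc, hsq i hi]
      rw [ha']
      rw [show (μ i)⁻¹ * ((B *ᵥ v i) ⬝ᵥ (ρ.toBlocks₁₁ *ᵥ (B *ᵥ v i))) * b i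
          = (μ i)⁻¹ * (((B *ᵥ v i) ⬝ᵥ (ρ.toBlocks₁₁ *ᵥ (B *ᵥ v i))) * b i) from by ring]
      calc μ i = (μ i)⁻¹ * (μ i ^ 2) := by field_simp [pow_two]
      _ ≤ _ := mul_le_mul_of_nonneg_left hq (inv_nonneg.mpr (hμ0 i))
  -- sums
  have hsumb : ∑ i, b i = ρ.toBlocks₂₂.trace := aux_sum_quad_eq_trace _ v hrow
  have hsuma : ∑ i, a i ≤ ρ.toBlocks₁₁.trace := aux_sum_quad_le_trace hP w d hd1 hww
  -- trace norms
  have htnP : traceNorm ρ.toBlocks₁₁ = ρ.toBlocks₁₁.trace := aux_traceNorm_psd hP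
  have htnQ : traceNorm ρ.toBlocks₂₂ = ρ.toBlocks₂₂.trace := aux_traceNorm_psd hQ
  have htnB1 : traceNorm B = ∑ i, Real.sqrt (μ i) := aux_traceNorm_eq_sum B
  have htnB0 : 0 ≤ traceNorm B := by
    rw [htnB1]
    exact Finset.sum_nonneg fun i _ => Real.sqrt_nonneg _
  have h2 : traceNorm B ≤ ∑ i, Real.sqrt (a i * b i) := by
    rw [htnB1]
    exact Finset.sum_le_sum fun i _ => Real.sqrt_le_sqrt (hμab i)
  have h3 : (∑ i, Real.sqrt (a i * b i)) ^ 2 ≤ (∑ i, a i) * (∑ i, b i) :=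
    Finset.sum_sq_le_sum_mul_sum_of_sq_eq_mul Finset.univ (fun i _ => ha0 i) (fun i _ => hb0 i)
      (fun i _ => Real.sq_sqrt (mul_nonneg (ha0 i) (hb0 i)))
  have hbsum0 : 0 ≤ ∑ i, b i := Finset.sum_nonneg fun i _ => hb0 i
  have h4 : (∑ i, a i) * (∑ i, b i) ≤ ρ.toBlocks₁₁.trace * ρ.toBlocks₂₂.trace := by
    rw [hsumb]
    exact mul_le_mul_of_nonneg_right hsuma hQt
  have htnB : traceNorm B ^ 2 ≤ ρ.toBlocks₁₁.trace * ρ.toBlocks₂₂.trace := by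
    calc traceNorm B ^ 2 ≤ (∑ i, Real.sqrt (a i * b i)) ^ 2 := by
          apply pow_le_pow_left₀ htnB0 h2
    _ ≤ (∑ i, a i) * (∑ i, b i) := h3
    _ ≤ _ := h4
  rw [htnP, htnQ]
  nlinarith [htnB, hPt, hQt, htrace_split]
end
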